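/- For every subset U of [n] and every x in D_U(n), the transitive closure cl(x) belongs to A_U(n); consequently cl(x) is the least element of A_U(n) containing x. -/

import Mathlib

/-- `J_n = {(i,j) : 1 ≤ i < j ≤ n}`. -/
def JnS (n : ℕ) : Set (ℕ × ℕ) := {p | 1 ≤ p.1 ∧ p.1 < p.2 ∧ p.2 ≤ n}

/-- Transitivity of a set of pairs, viewed as a binary relation. -/
def TransSet (x : Set (ℕ × ℕ)) : Prop := ∀ i j k : ℕ, (i, j) ∈ x → (j, k) ∈ x → (i, k) ∈ x

/-- `D_U(n)`: subsets `x ⊆ J_n` such that whenever `i < j < k` and `(i,k) ∈ x`,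
then `(i,j) ∈ x` if `j ∈ U` and `(j,k) ∈ x` if `j ∉ U`. -/
def DUset (n : ℕ) (U : Set ℕ) (x : Set (ℕ × ℕ)) : Prop :=
  x ⊆ JnS n ∧ ∀ i j k : ℕ, i < j → j < k → (i, k) ∈ x →
    ((j ∈ U → (i, j) ∈ x) ∧ (j ∉ U → (j, k) ∈ x))

/-- `A_U(n)`: the transitive members of `D_U(n)`. -/
def AUset (n : ℕ) (U : Set ℕ) (x : Set (ℕ × ℕ)) : Prop := DUset n U x ∧ TransSet x

/-- The transitive closure of a set of pairs. -/
def clS (x : Set (ℕ × ℕ)) : Set (ℕ × ℕ) :=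
  {p | Relation.TransGen (fun a b => (a, b) ∈ x) p.1 p.2}

lemma clS_sub_Jn {n : ℕ} {x : Set (ℕ × ℕ)} (hxJ : x ⊆ JnS n) : clS x ⊆ JnS n := by
  rintro ⟨i, k⟩ h
  simp only [clS, Set.mem_setOf_eq] at h
  induction h with
  | single h => exact hxJ h
  | tail _ h ih =>
    have := hxJ h
    exact ⟨ih.1, lt_trans ih.2.1 this.2.1, this.2.2⟩

lemma clS_D {n : ℕ} {U : Set ℕ} {x : Set (ℕ × ℕ)} (hx : DUset n U x)
    {i k : ℕ} (h : (i, k) ∈ clS x) :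
    ∀ j, i < j → j < k →
      (j ∈ U → (i, j) ∈ clS x) ∧ (j ∉ U → (j, k) ∈ clS x) := by
  simp only [clS, Set.mem_setOf_eq] at h ⊢
  induction h using Relation.TransGen.head_induction_on with
  | single h =>
    intro j hij hjk
    exact ⟨fun hU => Relation.TransGen.single ((hx.2 _ j k hij hjk h).1 hU),
      fun hU => Relation.TransGen.single ((hx.2 _ j k hij hjk h).2 hU)⟩
  | head hib hbk IH =>
    rename_i i b
    intro j hij hjk
    have hib' : i < b := (hx.1 hib).2.1
    rcases lt_trichotomy j b with hjb | rfl | hbj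
    · refine ⟨fun hU => Relation.TransGen.single ((hx.2 i j b hij hjb hib).1 hU),
        fun hU => Relation.TransGen.head ((hx.2 i j b hij hjb hib).2 hU) hbk⟩
    · exact ⟨fun _ => Relation.TransGen.single hib, fun _ => hbk⟩
    · exact ⟨fun hU => Relation.TransGen.head hib ((IH j hbj hjk).1 hU),
        fun hU => (IH j hbj hjk).2 hU⟩

/-- For every `U ⊆ [n]` and every `x ∈ D_U(n)`, the transitive closure `cl x` belongs
to `A_U(n)`; consequently `cl x` is the least element of `A_U(n)` containing `x`. -/
theorem stmt8 (n : ℕ) (U : Set ℕ) (hUn : U ⊆ Set.Icc 1 n)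
    (x : Set (ℕ × ℕ)) (hx : DUset n U x) :
    AUset n U (clS x) ∧ IsLeast {y | AUset n U y ∧ x ⊆ y} (clS x) := by
  have hA : AUset n U (clS x) := by
    refine ⟨⟨clS_sub_Jn hx.1, fun i j k hij hjk h => clS_D hx h j hij hjk⟩,
      fun i j k h1 h2 => Relation.TransGen.trans h1 h2⟩
  refine ⟨hA, ⟨hA, fun p hp => Relation.TransGen.single hp⟩, ?_⟩
  rintro y ⟨hy, hxy⟩ ⟨i, k⟩ h
  simp only [clS, Set.mem_setOf_eq] at h
  induction h with
  | single h => exact hxy h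
  | tail _ h ih => exact hy.2 _ _ _ ih (hxy h)
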